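/- Let n, m, ℓ be nonnegative integers. Then 2F1(-ℓ, -n-ℓ; -m-n-2ℓ; z) = ((m+ℓ)!(n+m+ℓ)!/(m!(n+m+2ℓ)!)) · 2F1(-ℓ, -n-ℓ; m+1; 1-z), as polynomials in z. -/

import Mathlib

open Finset

noncomputable def poch (x : ℂ) (k : ℕ) : ℂ := (ascPochhammer ℂ k).eval x

/-- Terminating Gauss hypergeometric series `2F1(-n, b; c; z)` as a finite sum. -/
noncomputable def hyp (n : ℕ) (b c : ℂ) (z : ℂ) : ℂ :=
  ∑ k ∈ Finset.range (n + 1),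
    poch (-(n : ℂ)) k * poch b k / (poch c k * (Nat.factorial k : ℂ)) * z ^ k

lemma poch_neg_nat (a k : ℕ) : poch (-(a : ℂ)) k = (-1) ^ k * (k.factorial : ℂ) * (a.choose k) := by
  rw [poch, ascPochhammer_eval_neg_eq_descPochhammer, descPochhammer_eval_eq_descFactorial,
    Nat.descFactorial_eq_factorial_mul_choose]
  push_cast
  ring

lemma poch_nat_succ (m k : ℕ) : poch ((m : ℂ) + 1) k = (k.factorial : ℂ) * ((m + k).choose k) := by
  rw [poch, show ((m : ℂ) + 1) = (((m + 1 : ℕ) : ℕ) : ℂ) by push_cast; ring,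
    ← ascPochhammer_eval_cast, ascPochhammer_nat_eq_ascFactorial,
    Nat.ascFactorial_eq_factorial_mul_choose]
  push_cast
  ring

lemma vand (L M n : ℕ) :
    ∑ i ∈ range (L + 1), L.choose i * M.choose (n + L - i) = (L + M).choose (n + L) := by
  rw [Nat.add_choose_eq, Finset.Nat.sum_antidiagonal_eq_sum_range_succ_mk]
  apply Finset.sum_subset (Finset.range_subset_range.mpr (by omega))
  intro x hx hx'
  simp only [Finset.mem_range] at hx hx'
  rw [Nat.choose_eq_zero_of_lt (by omega), Nat.zero_mul]

set_option maxHeartbeats 1600000 in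
theorem additive_case_transform_at_one (n m l : ℕ) (z : ℂ) :
    hyp l (-(n : ℂ) - l) (-(m : ℂ) - n - 2 * l) z =
      (Nat.factorial (m + l) : ℂ) * (Nat.factorial (n + m + l) : ℂ) /
          ((Nat.factorial m : ℂ) * (Nat.factorial (n + m + 2 * l) : ℂ)) *
        hyp l (-(n : ℂ) - l) ((m : ℂ) + 1) (1 - z) := by
  have fact_ne : ∀ a : ℕ, (a.factorial : ℂ) ≠ 0 := fun a =>
    Nat.cast_ne_zero.mpr a.factorial_ne_zero
  have choose_ne : ∀ a b : ℕ, b ≤ a → ((a.choose b : ℕ) : ℂ) ≠ 0 := fun a b h =>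
    Nat.cast_ne_zero.mpr (Nat.choose_pos h).ne'
  set K : ℂ := (Nat.factorial (m + l) : ℂ) * (Nat.factorial (n + m + l) : ℂ) /
      ((Nat.factorial m : ℂ) * (Nat.factorial (n + m + 2 * l) : ℂ)) with hK
  have hb : (-(n : ℂ) - l) = -(((n + l : ℕ) : ℕ) : ℂ) := by push_cast; ring
  have hc : (-(m : ℂ) - n - 2 * l) = -(((m + n + 2 * l : ℕ) : ℕ) : ℂ) := by push_cast; ring
  have lhs_eq : hyp l (-(n : ℂ) - l) (-(m : ℂ) - n - 2 * l) z =
      ∑ j ∈ range (l + 1),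
        ((l.choose j : ℂ) * ((n + l).choose j) / ((m + n + 2 * l).choose j)) *
          ((-1) ^ j * z ^ j) := by
    unfold hyp
    apply Finset.sum_congr rfl
    intro j hj
    simp only [Finset.mem_range] at hj
    rw [hb, hc, poch_neg_nat, poch_neg_nat, poch_neg_nat]
    have h1 := fact_ne j
    have h2 := choose_ne (m + n + 2 * l) j (by omega)
    have h3 : ((-1 : ℂ)) ^ j ≠ 0 := pow_ne_zero _ (by norm_num)
    field_simp
  have rhs_eq : hyp l (-(n : ℂ) - l) ((m : ℂ) + 1) (1 - z) =
      ∑ k ∈ range (l + 1),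
        ((l.choose k : ℂ) * ((n + l).choose k) / ((m + k).choose k)) * (1 - z) ^ k := by
    unfold hyp
    apply Finset.sum_congr rfl
    intro k hk
    rw [hb, poch_neg_nat, poch_neg_nat, poch_nat_succ]
    have h1 := fact_ne k
    have h2 := choose_ne (m + k) k (by omega)
    have h5 : ((-1 : ℂ)) ^ k * (-1) ^ k = 1 := by
      rw [← pow_add]; exact Even.neg_one_pow ⟨k, by ring⟩
    rw [show ((-1 : ℂ)) ^ k * (k.factorial : ℂ) * (l.choose k : ℂ) *
        ((-1) ^ k * (k.factorial : ℂ) * ((n + l).choose k : ℂ)) =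
        (k.factorial : ℂ) * (k.factorial : ℂ) * (l.choose k) * ((n + l).choose k) from by
      linear_combination (k.factorial : ℂ) * (k.factorial : ℂ) * (l.choose k : ℂ) *
        ((n + l).choose k : ℂ) * h5]
    simp only [div_mul_div_comm, div_div_eq_mul_div, div_div, mul_div_assoc', div_mul_eq_mul_div]
    rw [div_eq_div_iff (by simp [mul_ne_zero_iff, fact_ne, h2]) (by simp [mul_ne_zero_iff, fact_ne, h2])]
    ring
  have expand : ∀ k ∈ range (l + 1), (1 - z) ^ k =
      ∑ j ∈ range (l + 1), (k.choose j : ℂ) * ((-1) ^ j * z ^ j) := by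
    intro k hk
    simp only [Finset.mem_range] at hk
    have h : (1 - z) ^ k = ∑ j ∈ range (k + 1), (k.choose j : ℂ) * ((-1) ^ j * z ^ j) := by
      rw [show (1 : ℂ) - z = -z + 1 by ring, add_pow]
      apply Finset.sum_congr rfl
      intro j hj
      rw [neg_pow]
      ring
    rw [h]
    apply Finset.sum_subset (Finset.range_subset_range.mpr (by omega))
    intro x hx hx'
    simp only [Finset.mem_range] at hx hx'
    rw [Nat.choose_eq_zero_of_lt (by omega)]
    simp
  have key : ∀ j ∈ range (l + 1),
      (l.choose j : ℂ) * ((n + l).choose j) / ((m + n + 2 * l).choose j) =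
      K * ∑ k ∈ range (l + 1),
        ((l.choose k : ℂ) * ((n + l).choose k) / ((m + k).choose k)) * (k.choose j) := by
    intro j hj
    simp only [Finset.mem_range] at hj
    obtain ⟨L, rfl⟩ : ∃ L, l = j + L := ⟨l - j, by omega⟩
    have hsum : ∑ k ∈ range (j + L + 1),
        (((j + L).choose k : ℂ) * ((n + (j + L)).choose k) / ((m + k).choose k)) * (k.choose j) =
        ∑ i ∈ range (L + 1),
          (((j + L).choose (j + i) : ℂ) * ((n + (j + L)).choose (j + i)) /
            ((m + (j + i)).choose (j + i))) * ((j + i).choose j) := by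
      rw [show j + L + 1 = j + (L + 1) by omega, Finset.sum_range_add]
      have hz : ∑ k ∈ range j,
          (((j + L).choose k : ℂ) * ((n + (j + L)).choose k) / ((m + k).choose k)) *
            (k.choose j) = 0 := by
        apply Finset.sum_eq_zero
        intro k hk
        simp only [Finset.mem_range] at hk
        rw [Nat.choose_eq_zero_of_lt (show k < j by omega)]
        simp
      rw [hz, zero_add]
    rw [hsum]
    set E : ℂ := ((j + L).factorial : ℂ) * ((n + j + L).factorial) * m.factorial /
        (j.factorial * L.factorial * ((n + m + j + L).factorial)) with hE
    have term : ∀ i ∈ range (L + 1),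
        (((j + L).choose (j + i) : ℂ) * ((n + (j + L)).choose (j + i)) /
          ((m + (j + i)).choose (j + i))) * ((j + i).choose j) =
        E * ((L.choose i * (n + m + j + L).choose (n + L - i) : ℕ) : ℂ) := by
      intro i hi
      simp only [Finset.mem_range] at hi
      push_cast
      rw [Nat.cast_choose ℂ (show j + i ≤ j + L by omega),
        Nat.cast_choose ℂ (show j + i ≤ n + (j + L) by omega),
        Nat.cast_choose ℂ (show j + i ≤ m + (j + i) by omega),
        Nat.cast_choose ℂ (show j ≤ j + i by omega),
        Nat.cast_choose ℂ (show i ≤ L by omega),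
        Nat.cast_choose ℂ (show n + L - i ≤ n + m + j + L by omega)]
      rw [show j + L - (j + i) = L - i by omega,
        show n + (j + L) - (j + i) = n + L - i by omega,
        show m + (j + i) - (j + i) = m by omega,
        show j + i - j = i by omega,
        show n + m + j + L - (n + L - i) = m + (j + i) by omega,
        show n + (j + L) = n + j + L by omega]
      rw [hE]
      simp only [div_mul_div_comm, div_div_eq_mul_div, div_div, mul_div_assoc', div_mul_eq_mul_div]
      rw [div_eq_div_iff (by simp [mul_ne_zero_iff, fact_ne]) (by simp [mul_ne_zero_iff, fact_ne])]
      ring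
    rw [Finset.sum_congr rfl term, ← Finset.mul_sum, ← Nat.cast_sum, vand]
    rw [hK, hE, Nat.cast_choose ℂ (show j ≤ j + L by omega),
      Nat.cast_choose ℂ (show j ≤ n + (j + L) by omega),
      Nat.cast_choose ℂ (show j ≤ m + n + 2 * (j + L) by omega),
      Nat.cast_choose ℂ (show n + L ≤ L + (n + m + j + L) by omega)]
    rw [show j + L - j = L by omega,
      show n + (j + L) - j = n + L by omega,
      show m + n + 2 * (j + L) - j = n + m + j + 2 * L by omega,
      show L + (n + m + j + L) - (n + L) = m + j + L by omega]
    rw [show n + (j + L) = n + j + L by omega,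
      show m + n + 2 * (j + L) = n + m + 2 * j + 2 * L by omega,
      show n + m + 2 * (j + L) = n + m + 2 * j + 2 * L by omega,
      show m + (j + L) = m + j + L by omega,
      show n + m + (j + L) = n + m + j + L by omega,
      show L + (n + m + j + L) = n + m + j + 2 * L by omega]
    simp only [div_mul_div_comm, div_div_eq_mul_div, div_div, mul_div_assoc', div_mul_eq_mul_div]
    rw [div_eq_div_iff (by simp [mul_ne_zero_iff, fact_ne]) (by simp [mul_ne_zero_iff, fact_ne])]
    ring
  rw [lhs_eq, rhs_eq]
  calc ∑ j ∈ range (l + 1),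
        ((l.choose j : ℂ) * ((n + l).choose j) / ((m + n + 2 * l).choose j)) *
          ((-1) ^ j * z ^ j)
      = ∑ j ∈ range (l + 1), (K * ∑ k ∈ range (l + 1),
          ((l.choose k : ℂ) * ((n + l).choose k) / ((m + k).choose k)) * (k.choose j)) *
            ((-1) ^ j * z ^ j) :=
        Finset.sum_congr rfl fun j hj => by rw [key j hj]
    _ = ∑ j ∈ range (l + 1), ∑ k ∈ range (l + 1),
          K * (((l.choose k : ℂ) * ((n + l).choose k) / ((m + k).choose k)) *
            ((k.choose j : ℂ) * ((-1) ^ j * z ^ j))) := by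
        refine Finset.sum_congr rfl fun j hj => ?_
        rw [Finset.mul_sum, Finset.sum_mul]
        exact Finset.sum_congr rfl fun k hk => by ring
    _ = ∑ k ∈ range (l + 1), ∑ j ∈ range (l + 1),
          K * (((l.choose k : ℂ) * ((n + l).choose k) / ((m + k).choose k)) *
            ((k.choose j : ℂ) * ((-1) ^ j * z ^ j))) := Finset.sum_comm
    _ = K * ∑ k ∈ range (l + 1),
          ((l.choose k : ℂ) * ((n + l).choose k) / ((m + k).choose k)) * (1 - z) ^ k := by
        rw [Finset.mul_sum]
        refine Finset.sum_congr rfl fun k hk => ?_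
        rw [expand k hk, Finset.mul_sum, Finset.mul_sum]
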